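/- Let N ≥ 2, K > 0, ā > 0, and γ ∈ (0, π/2). Suppose θ : [0,∞) → ℝ^N is differentiable and satisfies the averaged (all-to-all) homogeneous Kuramoto system dθ_i/dt = (K/N)·∑_{j=1}^N ā·sin(θ_j(t) − θ_i(t)) for all t ≥ 0, with ∑_{i=1}^N θ_i(0) = 0 and |θ_i(0) − θ_j(0)| ≤ γ for all i, j. Then for all t ≥ 0: ∑_{i=1}^N θ_i(t)² ≤ (∑_{i=1}^N θ_i(0)²)·exp(−2·K·ā·cos γ·t); in particular θ(t) → 0 as t → ∞. -/

import Mathlib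

open Real Filter

lemma sin_lb {γ x : ℝ} (hγ0 : 0 < γ) (hγ : γ < Real.pi/2) (hx : |x| ≤ γ) :
    Real.cos γ * x^2 ≤ x * Real.sin x := by
  have key : ∀ y : ℝ, 0 ≤ y → y ≤ γ → Real.cos γ * y^2 ≤ y * Real.sin y := by
    intro y hy0 hyγ
    rcases eq_or_lt_of_le hy0 with h | h
    · simp [← h]
    · have h1 : y < Real.pi/2 := lt_of_le_of_lt hyγ hγ
      have hcy : 0 < Real.cos y := Real.cos_pos_of_mem_Ioo ⟨by linarith [Real.pi_pos], h1⟩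
      have htan : y < Real.tan y := Real.lt_tan h h1
      have hsin : y * Real.cos y ≤ Real.sin y := by
        rw [Real.tan_eq_sin_div_cos] at htan
        calc y * Real.cos y ≤ (Real.sin y / Real.cos y) * Real.cos y := by nlinarith
          _ = Real.sin y := by field_simp
      have hcc : Real.cos γ ≤ Real.cos y :=
        Real.cos_le_cos_of_nonneg_of_le_pi hy0 (by linarith [Real.pi_pos]) hyγ
      nlinarith
  rcases le_or_gt 0 x with h | h
  · exact key x h (by rwa [abs_of_nonneg h] at hx)
  · have := key (-x) (by linarith) (by rwa [abs_of_neg h] at hx)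
    simpa [neg_mul, mul_neg] using this

lemma sum_sq_diff {N : ℕ} (f : Fin N → ℝ) (h : ∑ i, f i = 0) :
    ∑ i, ∑ j, (f i - f j)^2 = 2 * N * ∑ i, f i ^ 2 := by
  have : ∀ i, ∑ j, (f i - f j)^2 = N * f i ^2 - 2 * f i * (∑ j, f j) + ∑ j, f j ^2 := by
    intro i
    rw [Finset.sum_congr rfl (fun j _ => by ring_nf : ∀ j ∈ Finset.univ, (f i - f j)^2 = f i^2 - 2*f i*f j + f j^2)]
    simp [Finset.sum_add_distrib, Finset.sum_sub_distrib, Finset.mul_sum, mul_assoc]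
  rw [Finset.sum_congr rfl (fun i _ => this i)]
  simp [h, Finset.sum_add_distrib, Finset.sum_sub_distrib, ← Finset.sum_mul]
  rw [← Finset.mul_sum]
  ring

lemma sym_sum {N : ℕ} (f : Fin N → ℝ) :
    2 * (∑ i, ∑ j, f i * Real.sin (f j - f i))
      = -∑ i, ∑ j, (f i - f j) * Real.sin (f i - f j) := by
  have h1 : (∑ i, ∑ j, f i * Real.sin (f j - f i))
      = ∑ i, ∑ j, f j * Real.sin (f i - f j) := Finset.sum_comm
  rw [two_mul]
  nth_rewrite 2 [h1]
  rw [← Finset.sum_add_distrib, ← Finset.sum_neg_distrib]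
  refine Finset.sum_congr rfl fun i _ => ?_
  rw [← Finset.sum_add_distrib, ← Finset.sum_neg_distrib]
  refine Finset.sum_congr rfl fun j _ => ?_
  have : Real.sin (f j - f i) = -Real.sin (f i - f j) := by
    rw [← Real.sin_neg]; ring_nf
  rw [this]; ring

lemma pair_term_nonpos {γ' a b c : ℝ} (hγ' : γ' < Real.pi/2)
    (h1 : |a-b| ≤ γ') (h2 : |c-a| ≤ γ') (h3 : |c-b| ≤ γ') :
    (a-b) * (Real.sin (c-a) - Real.sin (c-b)) ≤ 0 := by
  have habs := abs_nonneg (a-b)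
  have hγ'0 : 0 ≤ γ' := le_trans habs h1
  rw [Real.sin_sub_sin]
  have e1 : (c - a - (c - b))/2 = (b-a)/2 := by ring
  have e2 : (c - a + (c - b))/2 = c - (a+b)/2 := by ring
  rw [e1, e2]
  have hcos : 0 ≤ Real.cos (c - (a+b)/2) := by
    apply Real.cos_nonneg_of_mem_Icc
    have : |c - (a+b)/2| ≤ γ' := by
      have : c - (a+b)/2 = ((c-a) + (c-b))/2 := by ring
      rw [this]
      calc |((c-a)+(c-b))/2| ≤ (|c-a| + |c-b|)/2 := by
            rw [abs_div]; simp [abs_of_nonneg]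
            exact div_le_div_of_nonneg_right (abs_add_le _ _) (by norm_num)
        _ ≤ γ' := by linarith
    constructor <;> [linarith [abs_le.mp this] ; linarith [(abs_le.mp this).2]]
  have hsgn : 0 ≤ (a-b) * Real.sin ((a-b)/2) := by
    rcases le_or_gt 0 (a-b) with h | h
    · have hb : a - b ≤ γ' := by rw [abs_of_nonneg h] at h1; exact h1
      have : 0 ≤ Real.sin ((a-b)/2) :=
        Real.sin_nonneg_of_nonneg_of_le_pi (by linarith) (by
          have := Real.pi_gt_three; linarith)
      positivity
    · have hb : -(a-b) ≤ γ' := by rw [abs_of_neg h] at h1; exact h1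
      have : Real.sin ((a-b)/2) ≤ 0 := by
        have : 0 ≤ Real.sin (-((a-b)/2)) :=
          Real.sin_nonneg_of_nonneg_of_le_pi (by linarith) (by
            have := Real.pi_gt_three; linarith)
        rw [Real.sin_neg] at this; linarith
      nlinarith
  have hsin : Real.sin ((b-a)/2) = -Real.sin ((a-b)/2) := by
    rw [← Real.sin_neg]; ring_nf
  rw [hsin]
  nlinarith

lemma antisym_sum {N : ℕ} (f : Fin N → ℝ) :
    ∑ i, ∑ j, Real.sin (f j - f i) = 0 := by
  have h : (∑ i, ∑ j, Real.sin (f j - f i)) = -∑ i, ∑ j, Real.sin (f j - f i) := by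
    nth_rewrite 2 [Finset.sum_comm]
    rw [← Finset.sum_neg_distrib]
    refine Finset.sum_congr rfl fun i _ => ?_
    rw [← Finset.sum_neg_distrib]
    refine Finset.sum_congr rfl fun j _ => ?_
    rw [← Real.sin_neg]; ring_nf
  linarith

/-- Exponential synchronization for the averaged (all-to-all) homogeneous
Kuramoto system started in the phase-cohesive set Δ(γ), γ < π/2, with
mean zero. -/
theorem averaged_kuramoto_exponential_sync
    (N : ℕ) (hN : 2 ≤ N) (K : ℝ) (hK : 0 < K)
    (abar : ℝ) (habar : 0 < abar)
    (γ : ℝ) (hγ0 : 0 < γ) (hγ : γ < Real.pi / 2)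
    (θ : ℝ → Fin N → ℝ)
    (hode : ∀ t : ℝ, 0 ≤ t → ∀ i : Fin N,
      HasDerivAt (fun s => θ s i)
        ((K / N) * ∑ j : Fin N, abar * Real.sin (θ t j - θ t i)) t)
    (hmean0 : ∑ i : Fin N, θ 0 i = 0)
    (hinit : ∀ i j : Fin N, |θ 0 i - θ 0 j| ≤ γ) :
    (∀ t : ℝ, 0 ≤ t →
      ∑ i : Fin N, (θ t i) ^ 2
        ≤ (∑ i : Fin N, (θ 0 i) ^ 2)
            * Real.exp (-(2 * K * abar * Real.cos γ) * t))
    ∧ Tendsto θ atTop (nhds 0) := by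
  have hNpos : (0:ℝ) < N := by
    have : 0 < N := by omega
    exact_mod_cast this
  have hπ := Real.pi_pos
  have hcosγ : 0 < Real.cos γ := Real.cos_pos_of_mem_Ioo ⟨by linarith, hγ⟩
  set c : ℝ := 2 * K * abar * Real.cos γ with hc
  have hcpos : 0 < c := by positivity
  have hcontOn : ∀ (i : Fin N) (a b : ℝ), 0 ≤ a →
      ContinuousOn (fun s => θ s i) (Set.Icc a b) := fun i a b ha t ht =>
    ((hode t (le_trans ha ht.1) i).continuousAt).continuousWithinAt
  -- Step 1: cohesion is preserved
  have coh : ∀ t, 0 ≤ t → ∀ i j, |θ t i - θ t j| ≤ γ := by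
    by_contra hcon
    push_neg at hcon
    obtain ⟨t₁, ht₁, i0, j0, hbad⟩ := hcon
    set γ' := min ((γ + Real.pi/2)/2) (|θ t₁ i0 - θ t₁ j0|) with hγ'def
    have hγγ' : γ < γ' := lt_min (by linarith) hbad
    have hγ'2 : γ' < Real.pi/2 := lt_of_le_of_lt (min_le_left _ _) (by linarith)
    have hγ't₁ : γ' ≤ |θ t₁ i0 - θ t₁ j0| := min_le_right _ _
    set s := {t | t ∈ Set.Icc 0 t₁ ∧ ∃ i j, γ' ≤ |θ t i - θ t j|} with hsdef
    have hsc : IsClosed s := by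
      have hrw : s = ⋃ i : Fin N, ⋃ j : Fin N,
          (Set.Icc 0 t₁ ∩ (fun t => |θ t i - θ t j|) ⁻¹' Set.Ici γ') := by
        ext t
        simp only [hsdef, Set.mem_setOf_eq, Set.mem_iUnion, Set.mem_inter_iff,
          Set.mem_preimage, Set.mem_Ici]
        tauto
      rw [hrw]
      refine isClosed_iUnion_of_finite fun i => isClosed_iUnion_of_finite fun j => ?_
      exact ContinuousOn.preimage_isClosed_of_isClosed
        (((hcontOn i 0 t₁ le_rfl).sub (hcontOn j 0 t₁ le_rfl)).abs)
        isClosed_Icc isClosed_Ici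
    have hsne : s.Nonempty := ⟨t₁, ⟨ht₁, le_rfl⟩, i0, j0, hγ't₁⟩
    have hbdd : BddBelow s := ⟨0, fun t ht => ht.1.1⟩
    have hTs : sInf s ∈ s := hsc.csInf_mem hsne hbdd
    set T := sInf s with hTdef
    obtain ⟨⟨hT0, hTt₁⟩, i1, j1, hTpair⟩ := hTs
    have hTne : 0 < T := by
      rcases eq_or_lt_of_le hT0 with h | h
      · exfalso
        have := hinit i1 j1
        rw [← h] at hTpair
        linarith
      · exact h
    have hless : ∀ t ∈ Set.Ico (0:ℝ) T, ∀ i j, |θ t i - θ t j| ≤ γ' := by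
      intro t ht i j
      by_contra hgt
      push_neg at hgt
      have hts : t ∈ s := ⟨⟨ht.1, le_trans ht.2.le hTt₁⟩, i, j, hgt.le⟩
      exact absurd (csInf_le hbdd hts) (not_le.mpr ht.2)
    have hclose : ∀ t ∈ Set.Icc (0:ℝ) T, ∀ i j, |θ t i - θ t j| ≤ γ' := by
      intro t ht i j
      rcases lt_or_eq_of_le ht.2 with h | h
      · exact hless t ⟨ht.1, h⟩ i j
      · subst h
        have hC : IsClosed (Set.Icc 0 T ∩ (fun r => |θ r i - θ r j|) ⁻¹' Set.Iic γ') :=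
          ContinuousOn.preimage_isClosed_of_isClosed
            (((hcontOn i 0 T le_rfl).sub (hcontOn j 0 T le_rfl)).abs)
            isClosed_Icc isClosed_Iic
        have hsub : Set.Ico (0:ℝ) T ⊆
            Set.Icc 0 T ∩ (fun r => |θ r i - θ r j|) ⁻¹' Set.Iic γ' := fun x hx =>
          ⟨⟨hx.1, hx.2.le⟩, hless x hx i j⟩
        have hmem : T ∈ closure (Set.Ico (0:ℝ) T) := by
          rw [closure_Ico hTne.ne]
          exact ⟨hT0, le_rfl⟩
        exact ((closure_minimal hsub hC) hmem).2
    -- the witness pair squared difference is antitone on [0, T]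
    set u := fun t => (θ t i1 - θ t j1)^2 with hudef
    have hderivu : ∀ t ∈ Set.Ioo (0:ℝ) T, HasDerivAt u
        ((2:ℕ) * (θ t i1 - θ t j1)^1 *
          ((K / N) * ∑ j, abar * Real.sin (θ t j - θ t i1)
            - (K / N) * ∑ j, abar * Real.sin (θ t j - θ t j1))) t := by
      intro t ht
      exact ((hode t ht.1.le i1).sub (hode t ht.1.le j1)).pow 2
    have hanti : AntitoneOn u (Set.Icc 0 T) := by
      apply antitoneOn_of_deriv_nonpos (convex_Icc 0 T)
      · exact ((hcontOn i1 0 T le_rfl).sub (hcontOn j1 0 T le_rfl)).pow 2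
      · rw [interior_Icc]
        intro t ht
        exact ((hderivu t ht).differentiableAt).differentiableWithinAt
      · rw [interior_Icc]
        intro t ht
        rw [(hderivu t ht).deriv]
        have htIcc : t ∈ Set.Icc (0:ℝ) T := ⟨ht.1.le, ht.2.le⟩
        have key : ∑ k, (θ t i1 - θ t j1) *
            (Real.sin (θ t k - θ t i1) - Real.sin (θ t k - θ t j1)) ≤ 0 :=
          Finset.sum_nonpos fun k _ => pair_term_nonpos hγ'2
            (hclose t htIcc i1 j1) (hclose t htIcc k i1) (hclose t htIcc k j1)
        have heq : ((2:ℕ) : ℝ) * (θ t i1 - θ t j1)^1 *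
            ((K / N) * ∑ j, abar * Real.sin (θ t j - θ t i1)
              - (K / N) * ∑ j, abar * Real.sin (θ t j - θ t j1))
            = (2 * (K / N) * abar) * ∑ k, (θ t i1 - θ t j1) *
                (Real.sin (θ t k - θ t i1) - Real.sin (θ t k - θ t j1)) := by
          simp only [Finset.mul_sum, ← Finset.sum_sub_distrib]
          refine Finset.sum_congr rfl fun k _ => ?_
          push_cast
          ring
        rw [heq]
        exact mul_nonpos_of_nonneg_of_nonpos
          (mul_nonneg (mul_nonneg (by norm_num) (div_nonneg hK.le hNpos.le)) habar.le) key
    have h1 : u T ≤ u 0 := hanti ⟨le_rfl, hT0⟩ ⟨hT0, le_rfl⟩ hT0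
    have h2 : u 0 ≤ γ^2 := by
      have : u 0 = |θ 0 i1 - θ 0 j1|^2 := by rw [sq_abs]
      rw [this]
      exact pow_le_pow_left₀ (abs_nonneg _) (hinit i1 j1) 2
    have h3 : γ'^2 ≤ u T := by
      have : u T = |θ T i1 - θ T j1|^2 := by rw [sq_abs]
      rw [this]
      exact pow_le_pow_left₀ (by linarith) hTpair 2
    nlinarith
  -- Step 2: the mean stays zero
  have hmean : ∀ t, 0 ≤ t → ∑ i, θ t i = 0 := by
    intro t ht
    have hM : ∀ x ∈ Set.Ico (0:ℝ) t, HasDerivWithinAt (fun s => ∑ i, θ s i) 0 (Set.Ici x) x := by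
      intro x hx
      have h := HasDerivAt.fun_sum (fun i (_ : i ∈ Finset.univ) => hode x hx.1 i)
      have hz : (∑ i, (K / (N:ℝ)) * ∑ j, abar * Real.sin (θ x j - θ x i)) = 0 := by
        rw [← Finset.mul_sum]
        have h2 : ∑ i, ∑ j, abar * Real.sin (θ x j - θ x i)
            = abar * ∑ i, ∑ j, Real.sin (θ x j - θ x i) := by
          simp [Finset.mul_sum]
        rw [h2, antisym_sum]
        ring
      rw [hz] at h
      exact h.hasDerivWithinAt
    have hcont : ContinuousOn (fun s => ∑ i, θ s i) (Set.Icc 0 t) := fun s hs =>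
      (HasDerivAt.fun_sum (fun i (_ : i ∈ Finset.univ) =>
        hode s hs.1 i)).continuousAt.continuousWithinAt
    have := constant_of_has_deriv_right_zero hcont hM t ⟨ht, le_rfl⟩
    rw [this, hmean0]
  -- Step 3: Lyapunov function estimate
  set V := fun t => ∑ i, (θ t i)^2 with hVdef
  set D := fun t => ∑ i, ((2:ℕ) : ℝ) * (θ t i)^1 *
      ((K / N) * ∑ j, abar * Real.sin (θ t j - θ t i)) with hDdef
  have hVd : ∀ t, 0 ≤ t → HasDerivAt V (D t) t := fun t ht =>
    HasDerivAt.fun_sum (fun i (_ : i ∈ Finset.univ) => (hode t ht i).pow 2)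
  have hVnonneg : ∀ t, 0 ≤ V t := fun t => Finset.sum_nonneg fun i _ => sq_nonneg _
  have hDle : ∀ t, 0 ≤ t → D t ≤ -c * V t := by
    intro t ht
    have hDe : D t = (2 * (K / N) * abar) * ∑ i, ∑ j, θ t i * Real.sin (θ t j - θ t i) := by
      rw [hDdef]
      simp only [Finset.mul_sum]
      refine Finset.sum_congr rfl fun i _ => ?_
      refine Finset.sum_congr rfl fun j _ => ?_
      push_cast
      ring
    have hsym := sym_sum (θ t)
    have hQ : Real.cos γ * ∑ i, ∑ j, (θ t i - θ t j)^2
        ≤ ∑ i, ∑ j, (θ t i - θ t j) * Real.sin (θ t i - θ t j) := by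
      rw [Finset.mul_sum]
      refine Finset.sum_le_sum fun i _ => ?_
      rw [Finset.mul_sum]
      exact Finset.sum_le_sum fun j _ => sin_lb hγ0 hγ (coh t ht i j)
    rw [sum_sq_diff (θ t) (hmean t ht)] at hQ
    have hS1 : ∑ i, ∑ j, θ t i * Real.sin (θ t j - θ t i)
        ≤ -(Real.cos γ * N * V t) := by nlinarith
    rw [hDe]
    have hfac : 0 ≤ 2 * (K / (N:ℝ)) * abar :=
      mul_nonneg (mul_nonneg (by norm_num) (div_nonneg hK.le hNpos.le)) habar.le
    have := mul_le_mul_of_nonneg_left hS1 hfac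
    have heq : (2 * (K / (N:ℝ)) * abar) * (-(Real.cos γ * N * V t)) = -c * V t := by
      rw [hc]
      field_simp
    linarith [heq ▸ this]
  -- Step 4: Gronwall
  have hVle : ∀ t, 0 ≤ t → V t ≤ V 0 * Real.exp (-(c * t)) := by
    have hder : ∀ t, 0 ≤ t → HasDerivAt (fun t => V t * Real.exp (c * t))
        (D t * Real.exp (c * t) + V t * (Real.exp (c * t) * (c * 1))) t :=
      fun t ht => (hVd t ht).mul ((hasDerivAt_id t).const_mul c).exp
    have hanti : AntitoneOn (fun t => V t * Real.exp (c * t)) (Set.Ici 0) := by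
      apply antitoneOn_of_deriv_nonpos (convex_Ici 0)
      · intro t ht
        exact ((hVd t ht).continuousAt.mul
          ((Real.continuous_exp.comp (continuous_const.mul continuous_id)).continuousAt)).continuousWithinAt
      · rw [interior_Ici]
        intro t ht
        exact ((hder t (le_of_lt ht)).differentiableAt).differentiableWithinAt
      · rw [interior_Ici]
        intro t ht
        rw [(hder t (le_of_lt ht)).deriv]
        have hE := Real.exp_pos (c * t)
        have := hDle t ht.le
        have := hVnonneg t
        nlinarith
    intro t ht
    have hkey := hanti (Set.self_mem_Ici) ht ht
    simp only [mul_zero, Real.exp_zero, mul_one] at hkey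
    have hE := Real.exp_pos (c * t)
    rw [Real.exp_neg, ← div_eq_mul_inv, le_div_iff₀ hE]
    exact hkey
  have part1 : ∀ t : ℝ, 0 ≤ t →
      ∑ i : Fin N, (θ t i) ^ 2
        ≤ (∑ i : Fin N, (θ 0 i) ^ 2) * Real.exp (-(2 * K * abar * Real.cos γ) * t) := by
    intro t ht
    have := hVle t ht
    rw [neg_mul]
    exact this
  refine ⟨part1, ?_⟩
  -- Step 5: convergence to zero
  have hlim : Tendsto (fun t => V 0 * Real.exp (-(c * t))) atTop (nhds 0) := by
    have h1 : Tendsto (fun t : ℝ => c * t) atTop atTop :=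
      Tendsto.const_mul_atTop hcpos tendsto_id
    have h2 := Real.tendsto_exp_neg_atTop_nhds_zero.comp h1
    have h3 := h2.const_mul (V 0)
    simpa using h3
  rw [tendsto_pi_nhds]
  intro i
  simp only [Pi.zero_apply]
  have hsq : Tendsto (fun t => (θ t i)^2) atTop (nhds 0) := by
    apply squeeze_zero' (Eventually.of_forall fun t => sq_nonneg _) _ hlim
    filter_upwards [eventually_ge_atTop (0:ℝ)] with t ht
    calc (θ t i)^2 ≤ V t := Finset.single_le_sum (f := fun j => (θ t j)^2) (fun j _ => sq_nonneg _) (Finset.mem_univ i)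
      _ ≤ V 0 * Real.exp (-(c * t)) := hVle t ht
  rw [tendsto_zero_iff_abs_tendsto_zero]
  have h4 : Tendsto (fun t => Real.sqrt ((θ t i)^2)) atTop (nhds 0) := by
    have := (Real.continuous_sqrt.tendsto 0).comp hsq
    simpa [Function.comp_def] using this
  have : (abs ∘ fun t => θ t i) = fun t => Real.sqrt ((θ t i)^2) := by
    funext t
    simp [Real.sqrt_sq_eq_abs]
  rw [this]
  exact h4
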